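/- Let X, Y ∈ ℝ³ with 0 < ‖Y‖ < ‖X‖, let cos α = ⟨X,Y⟩/(‖X‖‖Y‖), and r = ‖Y‖/‖X‖. Then 1/‖X − Y‖ = (1/‖X‖) ∑_{n=0}^∞ P_n(cos α) r^n, and the series converges absolutely. -/

import Mathlib

/-- The Legendre polynomials, via the three-term recurrence. -/
noncomputable def legendre : ℕ → ℝ → ℝ
  | 0 => fun _ => 1
  | 1 => fun x => x
  | n + 2 => fun x =>
      ((2 * (n : ℝ) + 3) * x * legendre (n + 1) x - ((n : ℝ) + 1) * legendre n x) / ((n : ℝ) + 2)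

open Finset Complex

noncomputable def aa : ℕ → ℝ
  | 0 => 1
  | k + 1 => (2 * k + 1) / (2 * k + 2) * aa k

lemma aa_nonneg (k : ℕ) : 0 ≤ aa k := by
  induction k with
  | zero => norm_num [aa]
  | succ k ih => rw [aa]; positivity

lemma aa_le_one (k : ℕ) : aa k ≤ 1 := by
  induction k with
  | zero => norm_num [aa]
  | succ k ih =>
    rw [aa]
    have h1 : (2 * (k:ℝ) + 1) / (2 * k + 2) ≤ 1 := by
      rw [div_le_one (by positivity)]; linarith
    have := aa_nonneg k
    nlinarith

lemma aa_recC (k : ℕ) : ((k : ℂ) + 1) * (aa (k + 1) : ℂ) = ((k : ℂ) + 1/2) * (aa k : ℂ) := by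
  have h0 : ((k : ℝ) + 1) * aa (k + 1) = ((k : ℝ) + 1/2) * aa k := by
    rw [aa]
    have h : (2 * (k:ℝ) + 2) ≠ 0 := by positivity
    field_simp
  have h2 : ((((k : ℝ) + 1) * aa (k + 1) : ℝ) : ℂ) = ((((k : ℝ) + 1/2) * aa k : ℝ) : ℂ) := by
    rw [h0]
  push_cast at h2
  exact h2

noncomputable def SS (z w : ℂ) (n : ℕ) : ℂ :=
  ∑ k ∈ range (n + 1), (aa k : ℂ) * (aa (n - k) : ℂ) * z ^ k * w ^ (n - k)

lemma L1 (z w : ℂ) (m : ℕ) :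
    ∑ k ∈ range (m + 2), (k : ℂ) * ((aa k : ℂ) * (aa (m + 1 - k) : ℂ) * z ^ k * w ^ (m + 1 - k))
      = ∑ k ∈ range (m + 1), ((k : ℂ) + 1/2) * (aa k : ℂ) * (aa (m - k) : ℂ) * z ^ (k + 1) * w ^ (m - k) := by
  rw [Finset.sum_range_succ' (fun k => (k : ℂ) * ((aa k : ℂ) * (aa (m + 1 - k) : ℂ) * z ^ k * w ^ (m + 1 - k)))]
  simp only [Nat.cast_zero, zero_mul, add_zero]
  apply Finset.sum_congr rfl
  intro k hk
  have h1 : m + 1 - (k + 1) = m - k := by omega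
  rw [h1]
  have := aa_recC k
  push_cast
  linear_combination ((aa (m - k) : ℂ) * z ^ (k+1) * w ^ (m - k)) * this

lemma L2 (z w : ℂ) (m : ℕ) :
    ∑ k ∈ range (m + 2), (((m : ℂ) + 1) - k) * ((aa k : ℂ) * (aa (m + 1 - k) : ℂ) * z ^ k * w ^ (m + 1 - k))
      = ∑ k ∈ range (m + 1), (((m : ℂ) - k) + 1/2) * (aa k : ℂ) * (aa (m - k) : ℂ) * z ^ k * w ^ (m + 1 - k) := by
  rw [Finset.sum_range_succ]
  have hz : (((m : ℂ) + 1) - ((m + 1 : ℕ) : ℂ)) = 0 := by push_cast; ring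
  rw [hz, zero_mul, add_zero]
  apply Finset.sum_congr rfl
  intro k hk
  have hk' : k ≤ m := by simpa [Nat.lt_succ_iff] using hk
  have h1 : m + 1 - k = (m - k) + 1 := by omega
  rw [h1]
  have := aa_recC (m - k)
  have hc : ((m - k : ℕ) : ℂ) = (m : ℂ) - k := by
    push_cast [Nat.cast_sub hk']; ring
  rw [hc] at this
  linear_combination ((aa k : ℂ) * z ^ k * w ^ ((m - k) + 1)) * this

lemma SS_rec (z w : ℂ) (hzw : z * w = 1) (n : ℕ) :
    ((n : ℂ) + 2) * SS z w (n + 2)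
      = (2 * (n : ℂ) + 3) * ((z + w) / 2) * SS z w (n + 1) - ((n : ℂ) + 1) * SS z w n := by
  have h1 := L1 z w (n + 1)
  have h2 := L2 z w (n + 1)
  have h1' := L1 z w n
  have h2' := L2 z w n
  have hA : ((n : ℂ) + 2) * SS z w (n + 2)
      = (∑ k ∈ range (n + 1 + 2), (k : ℂ) * ((aa k : ℂ) * (aa (n + 1 + 1 - k) : ℂ) * z ^ k * w ^ (n + 1 + 1 - k)))
        + (∑ k ∈ range (n + 1 + 2), (((n + 1 : ℕ) : ℂ) + 1 - k) * ((aa k : ℂ) * (aa (n + 1 + 1 - k) : ℂ) * z ^ k * w ^ (n + 1 + 1 - k))) := by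
    rw [SS, Finset.mul_sum, ← Finset.sum_add_distrib]
    apply Finset.sum_congr rfl
    intro k hk
    push_cast
    ring
  rw [h1, h2] at hA
  have hB : (2 * (n : ℂ) + 3) * ((z + w) / 2) * SS z w (n + 1) - ((n : ℂ) + 2) * SS z w (n + 2)
      = z * (∑ k ∈ range (n + 1 + 1), (((n : ℂ) + 1) - k) * ((aa k : ℂ) * (aa (n + 1 - k) : ℂ) * z ^ k * w ^ (n + 1 - k)))
        + w * (∑ k ∈ range (n + 1 + 1), (k : ℂ) * ((aa k : ℂ) * (aa (n + 1 - k) : ℂ) * z ^ k * w ^ (n + 1 - k))) := by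
    rw [hA, SS, Finset.mul_sum, Finset.mul_sum, Finset.mul_sum]
    rw [← Finset.sum_add_distrib, ← Finset.sum_add_distrib, ← Finset.sum_sub_distrib]
    apply Finset.sum_congr rfl
    intro k hk
    have hk' : k ≤ n + 1 := by simpa [Nat.lt_succ_iff] using hk
    have e1 : n + 1 + 1 - k = (n + 1 - k) + 1 := by omega
    rw [e1, pow_succ]
    push_cast
    ring
  have hC : z * (∑ k ∈ range (n + 1 + 1), (((n : ℂ) + 1) - k) * ((aa k : ℂ) * (aa (n + 1 - k) : ℂ) * z ^ k * w ^ (n + 1 - k)))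
        + w * (∑ k ∈ range (n + 1 + 1), (k : ℂ) * ((aa k : ℂ) * (aa (n + 1 - k) : ℂ) * z ^ k * w ^ (n + 1 - k)))
      = ((n : ℂ) + 1) * SS z w n := by
    rw [h1', h2', SS, Finset.mul_sum, Finset.mul_sum, Finset.mul_sum, ← Finset.sum_add_distrib]
    apply Finset.sum_congr rfl
    intro k hk
    have hk' : k ≤ n := by simpa [Nat.lt_succ_iff] using hk
    have e1 : n + 1 - k = (n - k) + 1 := by omega
    rw [e1, pow_succ, pow_succ]
    linear_combination (((n : ℂ) + 1) * (aa k : ℂ) * (aa (n - k) : ℂ) * z ^ k * w ^ (n - k)) * hzw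
  linear_combination -hB - hC

lemma SS_zero (z w : ℂ) : SS z w 0 = 1 := by
  simp [SS, aa]

lemma SS_one (z w : ℂ) : SS z w 1 = (z + w) / 2 := by
  rw [SS]
  rw [Finset.sum_range_succ, Finset.sum_range_succ, Finset.sum_range_zero]
  norm_num [aa]
  ring

lemma natC_ne (n : ℕ) : ((n : ℂ) + 2) ≠ 0 := by
  have : ((n + 2 : ℕ) : ℂ) ≠ 0 := Nat.cast_ne_zero.2 (by omega)
  push_cast at this
  exact this

lemma SS_one_one (n : ℕ) : SS 1 1 n = 1 := by
  induction n using Nat.twoStepInduction with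
  | zero => exact SS_zero 1 1
  | one => rw [SS_one]; norm_num
  | more n ih1 ih2 =>
    have h := SS_rec 1 1 (by norm_num) n
    rw [ih1, ih2] at h
    apply mul_left_cancel₀ (natC_ne n)
    rw [h]; ring

lemma sum_aa (n : ℕ) : ∑ k ∈ range (n + 1), aa k * aa (n - k) = 1 := by
  have h := SS_one_one n
  rw [SS] at h
  simp only [one_pow, mul_one] at h
  have h2 : ((∑ k ∈ range (n + 1), aa k * aa (n - k) : ℝ) : ℂ) = ((1 : ℝ) : ℂ) := by
    push_cast
    simpa using h
  exact_mod_cast h2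

lemma SS_eq_legendre (z w : ℂ) (x : ℝ) (hzw : z * w = 1) (hx : z + w = 2 * (x : ℂ)) (n : ℕ) :
    SS z w n = (legendre n x : ℂ) := by
  induction n using Nat.twoStepInduction with
  | zero => rw [SS_zero]; norm_num [legendre]
  | one => rw [SS_one, hx, legendre]; ring
  | more n ih1 ih2 =>
    have h := SS_rec z w hzw n
    rw [ih1, ih2, hx] at h
    apply mul_left_cancel₀ (natC_ne n)
    rw [h]
    have hL : legendre (n + 2) x
        = ((2 * (n : ℝ) + 3) * x * legendre (n + 1) x - ((n : ℝ) + 1) * legendre n x) / ((n : ℝ) + 2) := by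
      rw [legendre]
    rw [hL]
    push_cast
    field_simp [natC_ne n]

lemma SS_norm_le (z w : ℂ) (hz : ‖z‖ ≤ 1) (hw : ‖w‖ ≤ 1) (n : ℕ) : ‖SS z w n‖ ≤ 1 := by
  rw [SS]
  calc ‖∑ k ∈ range (n + 1), (aa k : ℂ) * (aa (n - k) : ℂ) * z ^ k * w ^ (n - k)‖
      ≤ ∑ k ∈ range (n + 1), ‖(aa k : ℂ) * (aa (n - k) : ℂ) * z ^ k * w ^ (n - k)‖ :=
        norm_sum_le _ _
    _ ≤ ∑ k ∈ range (n + 1), aa k * aa (n - k) := by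
        apply Finset.sum_le_sum
        intro k hk
        rw [norm_mul, norm_mul, norm_mul, norm_pow, norm_pow, Complex.norm_real, Complex.norm_real,
          Real.norm_eq_abs, Real.norm_eq_abs,
          _root_.abs_of_nonneg (aa_nonneg k), _root_.abs_of_nonneg (aa_nonneg (n - k))]
        have h1 : ‖z‖ ^ k ≤ 1 := pow_le_one₀ (norm_nonneg z) hz
        have h2 : ‖w‖ ^ (n - k) ≤ 1 := pow_le_one₀ (norm_nonneg w) hw
        have ha := aa_nonneg k
        have hb := aa_nonneg (n - k)
        calc aa k * aa (n - k) * ‖z‖ ^ k * ‖w‖ ^ (n - k)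
            ≤ aa k * aa (n - k) * 1 * 1 := by gcongr <;> positivity
          _ = aa k * aa (n - k) := by ring
    _ = 1 := sum_aa n


lemma summable_aux (c : ℝ) (hc0 : 0 ≤ c) (hc : c < 1) (u : ℂ) (hu : ‖u‖ = c) :
    Summable (fun k : ℕ => ‖(aa k : ℂ) * u ^ k‖) := by
  apply Summable.of_nonneg_of_le (fun k => norm_nonneg _) (fun k => ?_)
    (summable_geometric_of_lt_one hc0 hc)
  rw [norm_mul, norm_pow, hu, Complex.norm_real, Real.norm_eq_abs,
    _root_.abs_of_nonneg (aa_nonneg k)]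
  exact mul_le_of_le_one_left (pow_nonneg hc0 k) (aa_le_one k)

lemma Gsq (u : ℂ) (hu : ‖u‖ < 1) :
    (∑' k : ℕ, (aa k : ℂ) * u ^ k) * (∑' k : ℕ, (aa k : ℂ) * u ^ k) * (1 - u) = 1 := by
  have hn : Summable (fun k : ℕ => ‖(aa k : ℂ) * u ^ k‖) :=
    summable_aux ‖u‖ (norm_nonneg u) hu u rfl
  rw [tsum_mul_tsum_eq_tsum_sum_range_of_summable_norm hn hn]
  have h2 : ∑' n : ℕ, ∑ k ∈ range (n+1), ((aa k : ℂ) * u^k) * ((aa (n-k) : ℂ) * u^(n-k))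
      = ∑' n : ℕ, u ^ n := by
    apply tsum_congr
    intro n
    have hs : ∑ k ∈ range (n+1), ((aa k : ℂ) * u^k) * ((aa (n-k) : ℂ) * u^(n-k))
        = ∑ k ∈ range (n+1), ((aa k : ℂ) * (aa (n-k) : ℂ)) * u^n := by
      apply Finset.sum_congr rfl
      intro k hk
      have hk' : k ≤ n := by simpa [Nat.lt_succ_iff] using hk
      have hup : u^k * u^(n-k) = u^n := by rw [← pow_add]; congr 1; omega
      linear_combination ((aa k : ℂ) * (aa (n-k) : ℂ)) * hup
    rw [hs, ← Finset.sum_mul]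
    have hs2 : (∑ k ∈ range (n+1), (aa k : ℂ) * (aa (n-k) : ℂ)) = 1 := by
      have h4 := sum_aa n
      have h3 : ((∑ k ∈ range (n+1), aa k * aa (n-k) : ℝ) : ℂ) = ((1:ℝ):ℂ) := by rw [h4]
      push_cast at h3
      exact h3
    rw [hs2, one_mul]
  rw [h2, tsum_geometric_of_norm_lt_one hu]
  have hu1 : (1 : ℂ) - u ≠ 0 := by
    intro h
    have h5 : u = 1 := by linear_combination -h
    rw [h5] at hu; simp at hu
  field_simp

theorem green_legendre_expansion (X Y : EuclideanSpace ℝ (Fin 3))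
    (h0 : 0 < ‖Y‖) (hlt : ‖Y‖ < ‖X‖)
    (cosα r : ℝ) (hcos : cosα = inner ℝ X Y / (‖X‖ * ‖Y‖)) (hr : r = ‖Y‖ / ‖X‖) :
    1 / ‖X - Y‖ = (1 / ‖X‖) * ∑' n : ℕ, legendre n cosα * r ^ n ∧
      Summable (fun n : ℕ => |legendre n cosα * r ^ n|) := by
  have hX : 0 < ‖X‖ := lt_trans h0 hlt
  have hr0 : 0 < r := by rw [hr]; positivity
  have hr1 : r < 1 := by rw [hr, div_lt_one hX]; exact hlt
  have hx1 : |cosα| ≤ 1 := by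
    rw [hcos, abs_div, _root_.abs_of_pos (by positivity : (0:ℝ) < ‖X‖ * ‖Y‖)]
    rw [div_le_one (by positivity)]
    exact abs_real_inner_le_norm X Y
  have hx1' := abs_le.1 hx1
  have hcsq : cosα ^ 2 ≤ 1 := by nlinarith
  set z : ℂ := (cosα : ℂ) + ((Real.sqrt (1 - cosα^2) : ℝ) : ℂ) * Complex.I with hzdef
  have hnormSq : Complex.normSq z = 1 := by
    rw [hzdef, Complex.normSq_add_mul_I, Real.sq_sqrt (by linarith)]
    ring
  have hzw : z * (starRingEnd ℂ) z = 1 := by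
    rw [Complex.mul_conj, hnormSq]; norm_num
  have hre : z.re = cosα := by simp [hzdef]
  have hx2 : z + (starRingEnd ℂ) z = 2 * (cosα : ℂ) := by
    rw [Complex.add_conj, hre]; push_cast; ring
  have hz1 : ‖z‖ = 1 := by
    rw [Complex.norm_def, hnormSq, Real.sqrt_one]
  have hcz1 : ‖(starRingEnd ℂ) z‖ = 1 := by
    have h11 : ‖(starRingEnd ℂ) z‖ = ‖z‖ := by
      simp [Complex.norm_conj]
    rw [h11, hz1]
  have hleg : ∀ n, SS z ((starRingEnd ℂ) z) n = (legendre n cosα : ℂ) :=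
    SS_eq_legendre z _ cosα hzw hx2
  have hbound : ∀ n, |legendre n cosα| ≤ 1 := by
    intro n
    have h6 := SS_norm_le z ((starRingEnd ℂ) z) (le_of_eq hz1) (le_of_eq hcz1) n
    rw [hleg n, Complex.norm_real, Real.norm_eq_abs] at h6
    exact h6
  have hsum2 : Summable (fun n : ℕ => |legendre n cosα * r ^ n|) := by
    apply Summable.of_nonneg_of_le (fun n => abs_nonneg _) (fun n => ?_)
      (summable_geometric_of_lt_one hr0.le hr1)
    rw [abs_mul, _root_.abs_pow, _root_.abs_of_pos hr0]
    exact mul_le_of_le_one_left (pow_nonneg hr0.le n) (hbound n)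
  refine ⟨?_, hsum2⟩
  -- norms of r*z and r*conj z
  have hnrz : ‖(r:ℂ) * z‖ = r := by
    rw [norm_mul, hz1, Complex.norm_real, Real.norm_eq_abs, _root_.abs_of_pos hr0, mul_one]
  have hnrcz : ‖(r:ℂ) * (starRingEnd ℂ) z‖ = r := by
    rw [norm_mul, hcz1, Complex.norm_real, Real.norm_eq_abs, _root_.abs_of_pos hr0, mul_one]
  have hf : Summable (fun k : ℕ => ‖(aa k : ℂ) * ((r:ℂ) * z) ^ k‖) :=
    summable_aux r hr0.le hr1 _ hnrz
  have hg : Summable (fun k : ℕ => ‖(aa k : ℂ) * ((r:ℂ) * (starRingEnd ℂ) z) ^ k‖) :=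
    summable_aux r hr0.le hr1 _ hnrcz
  have hinner : ∀ n : ℕ, ∑ k ∈ range (n+1),
      ((aa k : ℂ) * ((r:ℂ) * z) ^ k) * ((aa (n-k) : ℂ) * ((r:ℂ) * (starRingEnd ℂ) z) ^ (n-k))
      = ((legendre n cosα * r ^ n : ℝ) : ℂ) := by
    intro n
    have hs : ∑ k ∈ range (n+1),
        ((aa k : ℂ) * ((r:ℂ) * z) ^ k) * ((aa (n-k) : ℂ) * ((r:ℂ) * (starRingEnd ℂ) z) ^ (n-k))
        = ((r:ℂ)) ^ n * SS z ((starRingEnd ℂ) z) n := by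
      rw [SS, Finset.mul_sum]
      apply Finset.sum_congr rfl
      intro k hk
      have hk' : k ≤ n := by simpa [Nat.lt_succ_iff] using hk
      rw [mul_pow, mul_pow]
      have hrn : ((r:ℂ))^k * ((r:ℂ))^(n-k) = ((r:ℂ))^n := by rw [← pow_add]; congr 1; omega
      linear_combination ((aa k : ℂ) * (aa (n-k) : ℂ) * z^k * ((starRingEnd ℂ) z)^(n-k)) * hrn
    rw [hs, hleg n]
    push_cast
    ring
  have hT : (∑' k : ℕ, (aa k : ℂ) * ((r:ℂ) * z) ^ k)
      * (∑' k : ℕ, (aa k : ℂ) * ((r:ℂ) * (starRingEnd ℂ) z) ^ k)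
      = ((∑' n : ℕ, legendre n cosα * r ^ n : ℝ) : ℂ) := by
    rw [tsum_mul_tsum_eq_tsum_sum_range_of_summable_norm hf hg, Complex.ofReal_tsum]
    exact tsum_congr hinner
  -- nonnegativity
  have hgs : (∑' k : ℕ, (aa k : ℂ) * ((r:ℂ) * (starRingEnd ℂ) z) ^ k)
      = (starRingEnd ℂ) (∑' k : ℕ, (aa k : ℂ) * ((r:ℂ) * z) ^ k) := by
    rw [show ((starRingEnd ℂ) (∑' k : ℕ, (aa k : ℂ) * ((r:ℂ) * z) ^ k))
        = star (∑' k : ℕ, (aa k : ℂ) * ((r:ℂ) * z) ^ k) from rfl, tsum_star]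
    apply tsum_congr
    intro k
    simp [map_mul, map_pow, Complex.conj_ofReal]
  have ht0 : 0 ≤ ∑' n : ℕ, legendre n cosα * r ^ n := by
    have h7 : ((∑' n : ℕ, legendre n cosα * r ^ n : ℝ) : ℂ)
        = ((Complex.normSq (∑' k : ℕ, (aa k : ℂ) * ((r:ℂ) * z) ^ k) : ℝ) : ℂ) := by
      rw [← hT, hgs, Complex.mul_conj]
    have h8 := Complex.ofReal_injective h7
    rw [h8]
    exact Complex.normSq_nonneg _
  -- the algebraic identity
  have he1 := Gsq ((r:ℂ) * z) (by rw [hnrz]; exact hr1)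
  have he2 := Gsq ((r:ℂ) * (starRingEnd ℂ) z) (by rw [hnrcz]; exact hr1)
  have hid : (((∑' n : ℕ, legendre n cosα * r ^ n : ℝ) : ℂ))^2
      * ((1 - (r:ℂ) * z) * (1 - (r:ℂ) * (starRingEnd ℂ) z)) = 1 := by
    rw [← hT]
    linear_combination ((∑' k : ℕ, (aa k : ℂ) * ((r:ℂ) * (starRingEnd ℂ) z) ^ k)
      * (∑' k : ℕ, (aa k : ℂ) * ((r:ℂ) * (starRingEnd ℂ) z) ^ k)
      * (1 - (r:ℂ) * (starRingEnd ℂ) z)) * he1 + he2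
  have hDc : (1 - (r:ℂ) * z) * (1 - (r:ℂ) * (starRingEnd ℂ) z)
      = ((1 - 2*cosα*r + r^2 : ℝ) : ℂ) := by
    push_cast
    linear_combination ((r:ℂ)^2) * hzw - (r:ℂ) * hx2
  have hreal : (∑' n : ℕ, legendre n cosα * r ^ n)^2 * (1 - 2*cosα*r + r^2) = 1 := by
    rw [hDc] at hid
    exact_mod_cast hid
  -- geometry
  have hip : (inner ℝ X Y : ℝ) = cosα * (‖X‖ * ‖Y‖) := by
    rw [hcos]; field_simp
  have hYr : ‖Y‖ = r * ‖X‖ := by rw [hr]; field_simp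
  have hXY2 : ‖X - Y‖^2 = ‖X‖^2 * (1 - 2*cosα*r + r^2) := by
    rw [norm_sub_sq_real, hip, hYr]; ring
  have hXYpos : 0 < ‖X - Y‖ := by
    have hD0 : 0 < 1 - 2*cosα*r + r^2 := by nlinarith [sq_nonneg (1 - r)]
    have h9 : 0 < ‖X - Y‖^2 := by rw [hXY2]; exact mul_pos (by positivity) hD0
    have h10 : ‖X - Y‖ ≠ 0 := by
      intro h; rw [h] at h9; simp at h9
    exact lt_of_le_of_ne (norm_nonneg _) (Ne.symm h10)
  have hkey : ‖X - Y‖ * (∑' n : ℕ, legendre n cosα * r ^ n) = ‖X‖ := by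
    have hsq : (‖X - Y‖ * (∑' n : ℕ, legendre n cosα * r ^ n))^2 = ‖X‖^2 := by
      rw [mul_pow, hXY2]
      linear_combination ‖X‖^2 * hreal
    have hab : 0 ≤ ‖X - Y‖ * (∑' n : ℕ, legendre n cosα * r ^ n) :=
      mul_nonneg (norm_nonneg _) ht0
    nlinarith [norm_nonneg X, hsq, hab]
  rw [eq_comm, mul_comm]
  have hX' : ‖X‖ ≠ 0 := ne_of_gt hX
  have hXY' : ‖X - Y‖ ≠ 0 := ne_of_gt hXYpos
  field_simp
  linear_combination hkey
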